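/- Let N ≥ 2 and let A_1, …, A_{N+1} be affinely independent points in the Euclidean space ℝ^N, with positive weights B_1, …, B_{N+1}. Then there exists a unique point x₀ ∈ ℝ^N minimizing the weighted Fermat objective f(x) = Σ_{i=1}^{N+1} B_i·dist(x, A_i); that is, the weighted Fermat–Torricelli point of the simplex exists and is unique. -/
import Mathlib


open Finset

/-- **Existence and uniqueness of the weighted Fermat–Torricelli point** of a
nondegenerate simplex in `ℝ^N`: there is a unique point minimizing the weighted
Fermat objective `f x = ∑ i, B i * dist x (A i)`. -/
theorem weighted_fermat_exists_unique
    (N : ℕ) (hN : 2 ≤ N)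
    (A : Fin (N + 1) → EuclideanSpace ℝ (Fin N))
    (hA : AffineIndependent ℝ A)
    (B : Fin (N + 1) → ℝ) (hB : ∀ i, 0 < B i) :
    ∃! x₀ : EuclideanSpace ℝ (Fin N),
      ∀ x, ∑ i, B i * dist x₀ (A i) ≤ ∑ i, B i * dist x (A i) := by
  set f : EuclideanSpace ℝ (Fin N) → ℝ := fun x => ∑ i, B i * dist x (A i) with hf
  have hfcont : Continuous f := by
    apply continuous_finset_sum
    intro i _
    exact continuous_const.mul (continuous_id.dist continuous_const)
  set C := f (A 0) with hCdef
  have hC0 : 0 ≤ C := Finset.sum_nonneg fun i _ => mul_nonneg (hB i).le dist_nonneg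
  set R := (C + 1) / B 0 with hRdef
  have hR0 : 0 ≤ R := div_nonneg (by linarith) (hB 0).le
  have hball : (A 0) ∈ Metric.closedBall (A 0) R := by simp [hR0]
  obtain ⟨x₀, hx₀mem, hx₀min⟩ := (isCompact_closedBall (A 0) R).exists_isMinOn
    ⟨A 0, hball⟩ hfcont.continuousOn
  have hglobal : ∀ x, f x₀ ≤ f x := by
    intro x
    by_cases hx : x ∈ Metric.closedBall (A 0) R
    · exact hx₀min hx
    · have h1 : f x₀ ≤ C := hx₀min hball
      have h2 : B 0 * dist x (A 0) ≤ f x :=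
        Finset.single_le_sum (f := fun i => B i * dist x (A i))
          (fun i _ => mul_nonneg (hB i).le dist_nonneg) (Finset.mem_univ 0)
      have h3 : R < dist x (A 0) := by simpa [Metric.mem_closedBall, not_le] using hx
      have h4 : C + 1 < dist x (A 0) * B 0 := (div_lt_iff₀ (hB 0)).mp h3
      nlinarith [dist_nonneg (x := x) (y := A 0)]
  refine ⟨x₀, hglobal, ?_⟩
  intro y hy
  by_contra hne
  have hfeq : f y = f x₀ := le_antisymm (hy x₀) (hglobal y)
  set m : EuclideanSpace ℝ (Fin N) := midpoint ℝ y x₀ with hm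
  have hle : ∀ i : Fin (N + 1),
      B i * dist m (A i) ≤ B i * ((dist y (A i) + dist x₀ (A i)) / 2) := by
    intro i
    refine mul_le_mul_of_nonneg_left ?_ (hB i).le
    have := dist_midpoint_midpoint_le y x₀ (A i) (A i)
    simpa [hm] using this
  have hsum : ∑ i, B i * dist m (A i)
      = ∑ i, B i * ((dist y (A i) + dist x₀ (A i)) / 2) := by
    have h1 : ∑ i, B i * ((dist y (A i) + dist x₀ (A i)) / 2) = f y := by
      have e : ∑ i, B i * ((dist y (A i) + dist x₀ (A i)) / 2)
          = (∑ i, B i * dist y (A i)) / 2 + (∑ i, B i * dist x₀ (A i)) / 2 := by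
        rw [Finset.sum_div, Finset.sum_div, ← Finset.sum_add_distrib]
        exact Finset.sum_congr rfl fun i _ => by ring
      rw [e, show (∑ i, B i * dist y (A i)) = f y from rfl,
        show (∑ i, B i * dist x₀ (A i)) = f x₀ from rfl, hfeq]
      ring
    have h2 : f y ≤ f m := hy m
    have h3 : ∑ i, B i * dist m (A i) ≤ ∑ i, B i * ((dist y (A i) + dist x₀ (A i)) / 2) :=
      Finset.sum_le_sum fun i _ => hle i
    have : f m ≤ f y := by rw [hf]; calc
      ∑ i, B i * dist m (A i) ≤ _ := h3
      _ = f y := h1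
    linarith [le_antisymm this h2, h3, h1.ge]
  have heach : ∀ i : Fin (N + 1),
      dist m (A i) = (dist y (A i) + dist x₀ (A i)) / 2 := by
    intro i
    have := (Finset.sum_eq_sum_iff_of_le (fun i _ => hle i)).mp hsum i (Finset.mem_univ i)
    exact mul_left_cancel₀ (hB i).ne' this
  have hray : ∀ i : Fin (N + 1), SameRay ℝ (y - A i) (x₀ - A i) := by
    intro i
    rw [sameRay_iff_norm_add]
    have h1 : dist m (A i) = ‖(y - A i) + (x₀ - A i)‖ / 2 := by
      have hmv : (m - A i : EuclideanSpace ℝ (Fin N))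
          = (2:ℝ)⁻¹ • ((y - A i) + (x₀ - A i)) := by
        rw [hm, midpoint_eq_smul_add, invOf_eq_inv]; module
      rw [dist_eq_norm, hmv, norm_smul]
      simp
      ring
    have h2 := heach i
    rw [h1, dist_eq_norm, dist_eq_norm] at h2
    field_simp at h2
    linarith
  have hyx : y ≠ x₀ := hne
  have hcol : Collinear ℝ (Set.range A) := by
    rw [collinear_iff_exists_forall_eq_smul_vadd]
    refine ⟨y, x₀ - y, ?_⟩
    rintro p ⟨i, rfl⟩
    rcases hray i with h0 | h0 | ⟨r1, r2, hr1, hr2, hr⟩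
    · exact ⟨0, by rw [sub_eq_zero] at h0; simp [← h0]⟩
    · exact ⟨1, by rw [sub_eq_zero] at h0; simp [← h0]⟩
    · have hrne : r1 ≠ r2 := by
        rintro rfl
        exact hyx (sub_left_inj.mp (smul_right_injective _ (ne_of_gt hr1) hr))
      refine ⟨r2 / (r2 - r1), ?_⟩
      have hsub : r2 - r1 ≠ 0 := sub_ne_zero.mpr (Ne.symm hrne)
      apply smul_right_injective (EuclideanSpace ℝ (Fin N)) hsub
      have key : (r2 - r1) • A i = r2 • x₀ - r1 • y := by
        have h' : (r1 • (y - A i) : EuclideanSpace ℝ (Fin N)) = r2 • (x₀ - A i) := hr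
        linear_combination (norm := module) h'
      show (r2 - r1) • A i = (r2 - r1) • ((r2 / (r2 - r1)) • (x₀ - y) +ᵥ y)
      rw [key, vadd_eq_add]
      match_scalars
      all_goals field_simp
      all_goals ring
  have hfin : Module.finrank ℝ (vectorSpan ℝ (Set.range A)) = N :=
    hA.finrank_vectorSpan (by simp)
  have := hcol.finrank_le_one
  rw [hfin] at this
  omega
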